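/- For every integer n ≥ 0, P_{n+1}(q,t) = q^n · t · Σ_{P∈D_n} q^{α(P)−β(P)} t^{des P}, as an identity in ℤ[q,t] (note α(P) ≥ β(P) for every Dyck path P, so the right-hand side is a polynomial); i.e., P_{n+1}(q,t) = q^n t C_n(q,q^{-1};t). -/

import Mathlib

open Finset MvPolynomial

/-- `σ` avoids the pattern 321. -/
def Avoids321 {n : ℕ} (σ : Equiv.Perm (Fin n)) : Prop :=
  ¬ ∃ i j k : Fin n, i < j ∧ j < k ∧ σ k < σ j ∧ σ j < σ i

instance {n : ℕ} : DecidablePred (Avoids321 (n := n)) := fun σ => by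
  unfold Avoids321; infer_instance

/-- The set of 321-avoiding permutations of `{1,…,n}` (modelled on `Fin n`). -/
def Av (n : ℕ) : Finset (Equiv.Perm (Fin n)) := univ.filter Avoids321

/-- The number of inversions of a permutation. -/
def invPerm {n : ℕ} (σ : Equiv.Perm (Fin n)) : ℕ :=
  (univ.filter (fun p : Fin n × Fin n => p.1 < p.2 ∧ σ p.2 < σ p.1)).card

/-- Position `i` is a left-right maximum of `σ`. -/
def IsLRMax {n : ℕ} (σ : Equiv.Perm (Fin n)) (i : Fin n) : Prop :=
  ∀ j, j ≤ i → σ j ≤ σ i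

instance {n : ℕ} (σ : Equiv.Perm (Fin n)) : DecidablePred (IsLRMax σ) := fun i => by
  unfold IsLRMax; infer_instance

/-- The number of left-right maxima of `σ`. -/
def lrm {n : ℕ} (σ : Equiv.Perm (Fin n)) : ℕ := (univ.filter (IsLRMax σ)).card

/-- The number of fixed points of `σ`. -/
def fixPerm {n : ℕ} (σ : Equiv.Perm (Fin n)) : ℕ := (univ.filter (fun i => σ i = i)).card

/-- The number of excedances of `σ`. -/
def excPerm {n : ℕ} (σ : Equiv.Perm (Fin n)) : ℕ := (univ.filter (fun i => i < σ i)).card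

/-- The descent set of `σ`: `i` is in it iff `σ` descends from position `i+1` to `i+2`
(0-based index `i` corresponds to the 1-based descent position `i+1`). -/
def DesPerm {n : ℕ} (σ : Equiv.Perm (Fin n)) : Finset (Fin n) :=
  univ.filter (fun i => ∃ h : i.val + 1 < n, σ ⟨i.val + 1, h⟩ < σ i)

/-- The number of descents of `σ`. -/
def desPerm {n : ℕ} (σ : Equiv.Perm (Fin n)) : ℕ := (DesPerm σ).card

/-- The major index of `σ` (descents at 1-based positions). -/
def majPerm {n : ℕ} (σ : Equiv.Perm (Fin n)) : ℕ := ∑ i ∈ DesPerm σ, (i.val + 1)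

/-- Number of `true` letters among the first `i` letters of the word `P`. -/
def UpCt {m : ℕ} (P : Fin m → Bool) (i : ℕ) : ℕ :=
  (univ.filter (fun j : Fin m => j.val < i ∧ P j = true)).card

/-- Number of `false` letters among the first `i` letters of the word `P`. -/
def DownCt {m : ℕ} (P : Fin m → Bool) (i : ℕ) : ℕ :=
  (univ.filter (fun j : Fin m => j.val < i ∧ P j = false)).card

/-- A word (with `true` = U, `false` = D) is a Dyck word: every prefix has at least as
many U's as D's, and the total numbers of U's and D's agree. -/
def IsDyck {m : ℕ} (P : Fin m → Bool) : Prop :=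
  (∀ i, i ≤ m → DownCt P i ≤ UpCt P i) ∧ UpCt P m = DownCt P m

instance {m : ℕ} : DecidablePred (IsDyck (m := m)) := fun P => by
  unfold IsDyck; infer_instance

/-- The Dyck paths of semilength `n`, as words of length `2n`. -/
def DyckSet (n : ℕ) : Finset (Fin (2 * n) → Bool) := univ.filter IsDyck

/-- Valleys (descents of the word, i.e. factors `DU`), recorded by the 0-based
index of the `D` step. -/
def Valleys {m : ℕ} (P : Fin m → Bool) : Finset (Fin m) :=
  univ.filter (fun j => P j = false ∧ ∃ h : j.val + 1 < m, P ⟨j.val + 1, h⟩ = true)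

/-- `des` of a path: the number of valleys. -/
def desPath {m : ℕ} (P : Fin m → Bool) : ℕ := (Valleys P).card

/-- `maj` of a path: the sum of the (1-based) positions of the descents. -/
def majPath {m : ℕ} (P : Fin m → Bool) : ℕ := ∑ j ∈ Valleys P, (j.val + 1)

/-- `α(P) = Σ_{i ∈ Des P} |p_i(P)|_U`. -/
def alphaPath {m : ℕ} (P : Fin m → Bool) : ℕ := ∑ j ∈ Valleys P, UpCt P (j.val + 1)

/-- `β(P) = Σ_{i ∈ Des P} |p_i(P)|_D`. -/
def betaPath {m : ℕ} (P : Fin m → Bool) : ℕ := ∑ j ∈ Valleys P, DownCt P (j.val + 1)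

/-- Peaks (factors `UD`), recorded by the 0-based index of the `U` step. -/
def Peaks {m : ℕ} (P : Fin m → Bool) : Finset (Fin m) :=
  univ.filter (fun j => P j = true ∧ ∃ h : j.val + 1 < m, P ⟨j.val + 1, h⟩ = false)

/-- The number of peaks of `P`. -/
def npea {m : ℕ} (P : Fin m → Bool) : ℕ := (Peaks P).card

/-- `spea P = Σ_p (HT(p) - 1)` over peaks `p`, where `HT` is the height of a peak. -/
def spea {m : ℕ} (P : Fin m → Bool) : ℕ :=
  ∑ j ∈ Peaks P, (UpCt P (j.val + 1) - DownCt P (j.val + 1) - 1)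

/-- The height of the path after `i` steps. -/
def htAt {m : ℕ} (P : Fin m → Bool) (i : ℕ) : ℤ := (UpCt P i : ℤ) - (DownCt P i : ℤ)

/-- The start of the tunnel of the valley whose lowest lattice point comes after
`k` steps: the largest `m < k` at which the path has the same height. -/
def tunnelStart {m : ℕ} (P : Fin m → Bool) (k : ℕ) : ℕ :=
  ((Finset.range k).filter (fun j => htAt P j = htAt P k)).sup id

/-- `stun P`: the sum over all valleys of the semilengths of their tunnels. -/
def stun {m : ℕ} (P : Fin m → Bool) : ℕ :=
  ∑ j ∈ Valleys P, (j.val + 1 - tunnelStart P (j.val + 1)) / 2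

/-- A parallelogram polyomino: a pair `(U,V)` of `N/E`-paths (`true` = N, `false` = E)
of the same length, with the same endpoints, such that `U` stays strictly above `V`
except at the endpoints (i.e. every proper nonempty prefix of `U` contains strictly
more `N`-steps than the corresponding prefix of `V`).  As noted by Fürlinger and
Hofbauer, the lower path begins with an `E`-step and the upper path ends with an
`E`-step; this is automatic for `m ≥ 2` and fixes the convention in the degenerate
case `m = 1`. -/
def IsParaPoly {m : ℕ} (U V : Fin m → Bool) : Prop :=
  UpCt U m = UpCt V m ∧ (∀ i, i < m → 1 ≤ i → UpCt V i < UpCt U i) ∧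
    UpCt V 1 = 0 ∧ UpCt U m = UpCt U (m - 1)

instance {m : ℕ} (U V : Fin m → Bool) : Decidable (IsParaPoly U V) := by
  unfold IsParaPoly; infer_instance

/-- The parallelogram polyominoes of size `n`. -/
def ParaSet (n : ℕ) : Finset ((Fin n → Bool) × (Fin n → Bool)) :=
  univ.filter (fun UV => IsParaPoly UV.1 UV.2)

/-- A shortened polyomino: a pair `(P,Q)` of `N/E`-paths of the same length with the
same endpoints such that `P` stays weakly above `Q` and the two paths share no
`N`-steps (an `N`-step is shared exactly when it occurs at the same index with equal
prefix `N`-counts). -/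
def IsShortPoly {m : ℕ} (P Q : Fin m → Bool) : Prop :=
  UpCt P m = UpCt Q m ∧ (∀ i, i ≤ m → UpCt Q i ≤ UpCt P i) ∧
    ∀ j : Fin m, UpCt P j.val = UpCt Q j.val → ¬(P j = true ∧ Q j = true)

instance {m : ℕ} (P Q : Fin m → Bool) : Decidable (IsShortPoly P Q) := by
  unfold IsShortPoly; infer_instance

/-- The shortened polyominoes of size `n`. -/
def ShortSet (n : ℕ) : Finset ((Fin n → Bool) × (Fin n → Bool)) :=
  univ.filter (fun PQ => IsShortPoly PQ.1 PQ.2)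

/-- The sum, over the `E`-steps of a path, of their heights (`N`-count before the step). -/
def eSum {m : ℕ} (W : Fin m → Bool) : ℕ :=
  ∑ j ∈ univ.filter (fun j : Fin m => W j = false), UpCt W j.val

/-- The area between the upper path `U` and the lower path `V`. -/
def areaPoly {m : ℕ} (U V : Fin m → Bool) : ℕ := eSum U - eSum V

/-- The number of columns spanned: the number of `E`-steps of the path. -/
def colPoly {m : ℕ} (W : Fin m → Bool) : ℕ := (univ.filter (fun j : Fin m => W j = false)).card

/-- `I_n(q,t) = Σ_{σ ∈ Av_n(321)} q^{inv σ} t^{lrm σ}`, with `q = X 0`, `t = X 1`. -/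
noncomputable def IPoly (n : ℕ) : MvPolynomial (Fin 2) ℤ :=
  ∑ σ ∈ Av n, X 0 ^ invPerm σ * X 1 ^ lrm σ

/-- `M_n(q,t) = Σ_{σ ∈ Av_n(321)} q^{maj σ} t^{des σ}`, with `q = X 0`, `t = X 1`. -/
noncomputable def MPoly (n : ℕ) : MvPolynomial (Fin 2) ℤ :=
  ∑ σ ∈ Av n, X 0 ^ majPerm σ * X 1 ^ desPerm σ

/-- `I_n(q,t,x) = Σ_{σ ∈ Av_n(321)} q^{inv σ} t^{lrm σ} x^{fix σ}`,
with `q = X 0`, `t = X 1`, `x = X 2`. -/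
noncomputable def IPoly3 (n : ℕ) : MvPolynomial (Fin 3) ℤ :=
  ∑ σ ∈ Av n, X 0 ^ invPerm σ * X 1 ^ lrm σ * X 2 ^ fixPerm σ

/-- `C_n(a,b;t) = Σ_{P ∈ D_n} a^{α(P)} b^{β(P)} t^{des P}`,
with `a = X 0`, `b = X 1`, `t = X 2`. -/
noncomputable def CPoly (n : ℕ) : MvPolynomial (Fin 3) ℤ :=
  ∑ P ∈ DyckSet n, X 0 ^ alphaPath P * X 1 ^ betaPath P * X 2 ^ desPath P

/-- `P_n(q,t) = Σ_{(U,V) ∈ 𝒫_n} q^{area(U,V)} t^{col(U,V)}`, with `q = X 0`, `t = X 1`. -/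
noncomputable def PPoly (n : ℕ) : MvPolynomial (Fin 2) ℤ :=
  ∑ UV ∈ ParaSet n, X 0 ^ areaPoly UV.1 UV.2 * X 1 ^ colPoly UV.1

/-- `I_n(-1,t) = Σ_{σ ∈ Av_n(321)} (-1)^{inv σ} t^{lrm σ} ∈ ℤ[t]`. -/
noncomputable def ISign (n : ℕ) : Polynomial ℤ :=
  ∑ σ ∈ Av n, Polynomial.C ((-1 : ℤ) ^ invPerm σ) * Polynomial.X ^ lrm σ

/-- Substitution `t ↦ q^k t` for polynomials in `q = X 0`, `t = X 1`. -/
noncomputable def subT (k : ℕ) (f : MvPolynomial (Fin 2) ℤ) : MvPolynomial (Fin 2) ℤ :=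
  bind₁ (fun i : Fin 2 => if i = 0 then X 0 else X 0 ^ k * X 1) f

/-- Substitution `t ↦ u` (third variable) for polynomials in `a = X 0`, `b = X 1`, `t = X 2`. -/
noncomputable def subT3 (u : MvPolynomial (Fin 3) ℤ) (f : MvPolynomial (Fin 3) ℤ) :
    MvPolynomial (Fin 3) ℤ :=
  bind₁ (fun i : Fin 3 => if i = 2 then u else X i) f

/-- Substitution `x ↦ 1` (third variable) for polynomials in `q = X 0`, `t = X 1`, `x = X 2`. -/
noncomputable def subX1 (f : MvPolynomial (Fin 3) ℤ) : MvPolynomial (Fin 3) ℤ :=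
  bind₁ (fun i : Fin 3 => if i = 2 then 1 else X i) f

/-- `val σ`: indicator vector of left-right maximum values (`val σ i = 1` iff the value `i`
occurs at a left-right maximum position of `σ`). -/
def valVec {n : ℕ} (σ : Equiv.Perm (Fin n)) (i : Fin n) : ℕ :=
  if ∃ j, IsLRMax σ j ∧ σ j = i then 1 else 0

/-- `pos σ`: indicator vector of left-right maximum positions. -/
def posVec {n : ℕ} (σ : Equiv.Perm (Fin n)) (i : Fin n) : ℕ :=
  if IsLRMax σ i then 1 else 0

section Count
open Finset
variable {m : ℕ}

lemma cnt_succ (q : Fin m → Prop) [DecidablePred q] {i : ℕ} (h : i < m) :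
    (univ.filter fun j : Fin m => j.val < i + 1 ∧ q j).card
      = (univ.filter fun j : Fin m => j.val < i ∧ q j).card + if q ⟨i, h⟩ then 1 else 0 := by
  classical
  have hset : (univ.filter fun j : Fin m => j.val < i + 1 ∧ q j)
      = (univ.filter fun j : Fin m => j.val < i ∧ q j)
        ∪ (univ.filter fun j : Fin m => j = ⟨i, h⟩ ∧ q j) := by
    ext j
    simp only [mem_filter, mem_univ, true_and, mem_union, Fin.ext_iff]
    constructor
    · rintro ⟨hj, hq⟩
      rcases Nat.lt_succ_iff_lt_or_eq.1 hj with h' | h'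
      · exact Or.inl ⟨h', hq⟩
      · exact Or.inr ⟨h', hq⟩
    · rintro (⟨hj, hq⟩ | ⟨hj, hq⟩)
      · exact ⟨Nat.lt_succ_of_lt hj, hq⟩
      · exact ⟨by omega, hq⟩
  have hdisj : Disjoint (univ.filter fun j : Fin m => j.val < i ∧ q j)
      (univ.filter fun j : Fin m => j = ⟨i, h⟩ ∧ q j) := by
    rw [Finset.disjoint_left]
    intro a ha hb
    simp only [mem_filter, mem_univ, true_and] at ha hb
    rw [hb.1] at ha; exact absurd ha.1 (by simp)
  rw [hset, card_union_of_disjoint hdisj]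
  congr 1
  by_cases hq : q ⟨i, h⟩
  · rw [if_pos hq]
    have : (univ.filter fun j : Fin m => j = ⟨i, h⟩ ∧ q j) = {⟨i, h⟩} := by
      ext j; simp only [mem_filter, mem_univ, true_and, mem_singleton]
      exact ⟨fun hj => hj.1, fun hj => ⟨hj, hj ▸ hq⟩⟩
    rw [this, card_singleton]
  · rw [if_neg hq]
    have : (univ.filter fun j : Fin m => j = ⟨i, h⟩ ∧ q j) = ∅ := by
      ext j; simp only [mem_filter, mem_univ, true_and, Finset.notMem_empty, iff_false, not_and]
      rintro rfl; exact hq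
    rw [this, card_empty]

lemma cnt_zero (q : Fin m → Prop) [DecidablePred q] :
    (univ.filter fun j : Fin m => j.val < 0 ∧ q j).card = 0 := by
  simp

lemma cnt_mono (q : Fin m → Prop) [DecidablePred q] {i i' : ℕ} (h : i ≤ i') :
    (univ.filter fun j : Fin m => j.val < i ∧ q j).card
      ≤ (univ.filter fun j : Fin m => j.val < i' ∧ q j).card := by
  apply Finset.card_le_card
  intro j hj; simp only [mem_filter, mem_univ, true_and] at *
  exact ⟨lt_of_lt_of_le hj.1 h, hj.2⟩

lemma cnt_stable (q : Fin m → Prop) [DecidablePred q] {i : ℕ} (h : m ≤ i) :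
    (univ.filter fun j : Fin m => j.val < i ∧ q j).card
      = (univ.filter fun j : Fin m => j.val < m ∧ q j).card := by
  congr 1; apply filter_congr; intro j _
  have h1 : j.val < i := lt_of_lt_of_le j.isLt h
  simp [h1, j.isLt]

lemma cnt_le (q : Fin m → Prop) [DecidablePred q] (i : ℕ) :
    (univ.filter fun j : Fin m => j.val < i ∧ q j).card ≤ i := by
  have : (univ.filter fun j : Fin m => j.val < i ∧ q j).card
      ≤ (Finset.range i).card := by
    apply Finset.card_le_card_of_injOn (fun j => j.val)
    · intro j hj; simp only [Finset.mem_coe, mem_filter] at hj; simp [hj.2.1]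
    · intro a _ b _ hab; exact Fin.ext hab
  simpa using this

lemma cnt_ext {q q' : Fin m → Prop} [DecidablePred q] [DecidablePred q'] {i : ℕ}
    (h : ∀ j : Fin m, j.val < i → (q j ↔ q' j)) :
    (univ.filter fun j : Fin m => j.val < i ∧ q j).card
      = (univ.filter fun j : Fin m => j.val < i ∧ q' j).card := by
  congr 1; apply filter_congr; intro j _
  constructor
  · rintro ⟨h1, h2⟩; exact ⟨h1, (h j h1).1 h2⟩
  · rintro ⟨h1, h2⟩; exact ⟨h1, (h j h1).2 h2⟩

-- instantiations for UpCt / DownCt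
lemma UpCt_succ (P : Fin m → Bool) {i : ℕ} (h : i < m) :
    UpCt P (i + 1) = UpCt P i + if P ⟨i, h⟩ = true then 1 else 0 :=
  cnt_succ (fun j => P j = true) h

lemma DownCt_succ (P : Fin m → Bool) {i : ℕ} (h : i < m) :
    DownCt P (i + 1) = DownCt P i + if P ⟨i, h⟩ = false then 1 else 0 :=
  cnt_succ (fun j => P j = false) h

lemma UpCt_zero (P : Fin m → Bool) : UpCt P 0 = 0 := cnt_zero _
lemma DownCt_zero (P : Fin m → Bool) : DownCt P 0 = 0 := cnt_zero _

lemma UpCt_mono (P : Fin m → Bool) {i i' : ℕ} (h : i ≤ i') : UpCt P i ≤ UpCt P i' :=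
  cnt_mono _ h
lemma DownCt_mono (P : Fin m → Bool) {i i' : ℕ} (h : i ≤ i') : DownCt P i ≤ DownCt P i' :=
  cnt_mono _ h

lemma UpCt_le (P : Fin m → Bool) (i : ℕ) : UpCt P i ≤ i := cnt_le _ i

lemma UpCt_add_DownCt (P : Fin m → Bool) {i : ℕ} (h : i ≤ m) :
    UpCt P i + DownCt P i = i := by
  induction i with
  | zero => simp [UpCt_zero, DownCt_zero]
  | succ k ih =>
    have hk : k < m := h
    rw [UpCt_succ P hk, DownCt_succ P hk]
    have := ih (le_of_lt hk)
    cases hb : P ⟨k, hk⟩ <;> simp [hb] <;> omega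

lemma UpCt_ext {P Q : Fin m → Bool} {i : ℕ} (h : ∀ j : Fin m, j.val < i → P j = Q j) :
    UpCt P i = UpCt Q i :=
  cnt_ext (fun j hj => by rw [h j hj])

lemma DownCt_ext {P Q : Fin m → Bool} {i : ℕ} (h : ∀ j : Fin m, j.val < i → P j = Q j) :
    DownCt P i = DownCt Q i :=
  cnt_ext (fun j hj => by rw [h j hj])

end Count
section Dyck
open Finset
variable {n : ℕ} {P : Fin (2 * n) → Bool}

lemma mem_DyckSet {Q : Fin (2 * n) → Bool} : Q ∈ DyckSet n ↔ IsDyck Q := by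
  simp [DyckSet]

lemma dyck_total (hP : IsDyck P) : UpCt P (2 * n) = n := by
  have h1 := UpCt_add_DownCt P (le_refl (2 * n))
  have h2 := hP.2
  omega

lemma dyck_dc_le_uc (hP : IsDyck P) {i : ℕ} (h : i ≤ 2 * n) : DownCt P i ≤ UpCt P i :=
  hP.1 i h

lemma dyck_first (hP : IsDyck P) (hn : 0 < n) : P ⟨0, by omega⟩ = true := by
  have h1 : (1 : ℕ) < 2 * n := by omega
  have hu := UpCt_succ P (show 0 < 2 * n by omega)
  have hd := DownCt_succ P (show 0 < 2 * n by omega)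
  have hle := dyck_dc_le_uc hP (show 1 ≤ 2 * n by omega)
  rw [UpCt_zero] at hu; rw [DownCt_zero] at hd
  by_contra hb
  simp only [Bool.not_eq_true] at hb
  rw [hb] at hu hd
  simp at hu hd
  omega

lemma dyck_last (hP : IsDyck P) (hn : 0 < n) : P ⟨2 * n - 1, by omega⟩ = false := by
  have h1 : 2 * n - 1 < 2 * n := by omega
  have hu := UpCt_succ P h1
  have hd := DownCt_succ P h1
  have heq : 2 * n - 1 + 1 = 2 * n := by omega
  rw [heq] at hu hd
  have hle := dyck_dc_le_uc hP (show 2 * n - 1 ≤ 2 * n by omega)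
  have htot := hP.2
  have hsum := UpCt_add_DownCt P (show 2 * n - 1 ≤ 2 * n by omega)
  by_contra hb
  simp only [Bool.not_eq_false] at hb
  rw [hb] at hu hd
  simp at hu hd
  omega

lemma mem_Peaks {j : Fin (2 * n)} :
    j ∈ Peaks P ↔ P j = true ∧ ∃ h : j.val + 1 < 2 * n, P ⟨j.val + 1, h⟩ = false := by
  simp [Peaks]

lemma mem_Valleys {j : Fin (2 * n)} :
    j ∈ Valleys P ↔ P j = false ∧ ∃ h : j.val + 1 < 2 * n, P ⟨j.val + 1, h⟩ = true := by
  simp [Valleys]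

/-- up-count just after a peak is positive -/
lemma peak_uc_pos {j : Fin (2 * n)} (hj : j ∈ Peaks P) : 1 ≤ UpCt P (j.val + 1) := by
  rw [UpCt_succ P j.isLt, (mem_Peaks.1 hj).1]
  simp

lemma peak_uc_le (hP : IsDyck P) {j : Fin (2 * n)} : UpCt P (j.val + 1) ≤ n := by
  calc UpCt P (j.val + 1) ≤ UpCt P (2 * n) := UpCt_mono P (by omega)
    _ = n := dyck_total hP

lemma valley_dc_pos {j : Fin (2 * n)} (hj : j ∈ Valleys P) : 1 ≤ DownCt P (j.val + 1) := by
  rw [DownCt_succ P j.isLt, (mem_Valleys.1 hj).1]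
  simp

lemma valley_dc_le (hP : IsDyck P) {j : Fin (2 * n)} : DownCt P (j.val + 1) ≤ n := by
  have h1 : DownCt P (j.val + 1) ≤ DownCt P (2 * n) := DownCt_mono P (by omega)
  have h2 := UpCt_add_DownCt P (le_refl (2 * n))
  have h3 := hP.2
  omega

/-- strict monotonicity of up-count across peaks -/
lemma peak_uc_strictMono {j j' : Fin (2 * n)} (hj' : P j' = true) (h : j < j') :
    UpCt P (j.val + 1) < UpCt P (j'.val + 1) := by
  have h1 : UpCt P (j.val + 1) ≤ UpCt P j'.val := UpCt_mono P (by omega)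
  have h2 := UpCt_succ P j'.isLt
  rw [hj'] at h2
  simp at h2
  omega

lemma peak_uc_injOn {j j' : Fin (2 * n)} (hj : j ∈ Peaks P) (hj' : j' ∈ Peaks P)
    (h : UpCt P (j.val + 1) = UpCt P (j'.val + 1)) : j = j' := by
  rcases lt_trichotomy j j' with hlt | heq | hlt
  · exact absurd h (Nat.ne_of_lt (peak_uc_strictMono (mem_Peaks.1 hj').1 hlt))
  · exact heq
  · exact absurd h.symm (Nat.ne_of_lt (peak_uc_strictMono (mem_Peaks.1 hj).1 hlt))

lemma valley_dc_strictMono {j j' : Fin (2 * n)} (hj' : P j' = false) (h : j < j') :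
    DownCt P (j.val + 1) < DownCt P (j'.val + 1) := by
  have h1 : DownCt P (j.val + 1) ≤ DownCt P j'.val := DownCt_mono P (by omega)
  have h2 := DownCt_succ P j'.isLt
  rw [hj'] at h2
  simp at h2
  omega

lemma valley_dc_injOn {j j' : Fin (2 * n)} (hj : j ∈ Valleys P) (hj' : j' ∈ Valleys P)
    (h : DownCt P (j.val + 1) = DownCt P (j'.val + 1)) : j = j' := by
  rcases lt_trichotomy j j' with hlt | heq | hlt
  · exact absurd h (Nat.ne_of_lt (valley_dc_strictMono (mem_Valleys.1 hj').1 hlt))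
  · exact heq
  · exact absurd h.symm (Nat.ne_of_lt (valley_dc_strictMono (mem_Valleys.1 hj).1 hlt))

/-- up-count is constant across a block of `false` letters -/
lemma UpCt_const_of_false {a b : ℕ} (hab : a ≤ b) (hb : b ≤ 2 * n)
    (h : ∀ q : Fin (2 * n), a ≤ q.val → q.val < b → P q = false) :
    UpCt P b = UpCt P a := by
  induction b with
  | zero => have : a = 0 := by omega
            rw [this]
  | succ k ih =>
    rcases Nat.eq_or_lt_of_le hab with heq | hlt
    · rw [heq]
    · have hk : k < 2 * n := hb
      rw [UpCt_succ P hk, h ⟨k, hk⟩ (show a ≤ k by omega) (show k < k + 1 by omega)]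
      simp
      exact ih (by omega) (by omega) (fun q hq1 hq2 => h q hq1 (by omega))

lemma DownCt_const_of_true {a b : ℕ} (hab : a ≤ b) (hb : b ≤ 2 * n)
    (h : ∀ q : Fin (2 * n), a ≤ q.val → q.val < b → P q = true) :
    DownCt P b = DownCt P a := by
  induction b with
  | zero => have : a = 0 := by omega
            rw [this]
  | succ k ih =>
    rcases Nat.eq_or_lt_of_le hab with heq | hlt
    · rw [heq]
    · have hk : k < 2 * n := hb
      rw [DownCt_succ P hk, h ⟨k, hk⟩ (show a ≤ k by omega) (show k < k + 1 by omega)]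
      simp
      exact ih (by omega) (by omega) (fun q hq1 hq2 => h q hq1 (by omega))

end Dyck
section Maps
open Finset
variable {n : ℕ} (P : Fin (2 * n) → Bool)

/-- the greatest position `p ≤ x` carrying a `true` (0 if none) -/
def pkPos (x : ℕ) : ℕ := Nat.findGreatest (fun p => ∃ h : p < 2 * n, P ⟨p, h⟩ = true) x

/-- the least position `w > x` carrying a `true` (0 if none) -/
def ftPos (x : ℕ) : ℕ :=
  if hx : ((Finset.range (2 * n)).filter
      (fun w => x < w ∧ ∃ h : w < 2 * n, P ⟨w, h⟩ = true)).Nonempty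
  then ((Finset.range (2 * n)).filter
      (fun w => x < w ∧ ∃ h : w < 2 * n, P ⟨w, h⟩ = true)).min' hx else 0

variable {P}

lemma pkPos_le (x : ℕ) : pkPos P x ≤ x := Nat.findGreatest_le x

lemma pkPos_spec {x : ℕ} (hP : IsDyck P) (hn : 0 < n) :
    ∃ h : pkPos P x < 2 * n, P ⟨pkPos P x, h⟩ = true :=
  Nat.findGreatest_spec (P := fun p => ∃ h : p < 2 * n, P ⟨p, h⟩ = true)
    (Nat.zero_le x) ⟨by omega, dyck_first hP hn⟩

lemma pkPos_greatest {x q : ℕ} (h1 : pkPos P x < q) (h2 : q ≤ x) (hq : q < 2 * n) :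
    P ⟨q, hq⟩ = false := by
  have h3 := Nat.findGreatest_is_greatest (P := fun p => ∃ h : p < 2 * n, P ⟨p, h⟩ = true) h1 h2
  simp only [not_exists] at h3
  simpa using h3 hq

lemma pkPos_lt {x : ℕ} (hP : IsDyck P) (hn : 0 < n) (hx : x < 2 * n)
    (hPx : P ⟨x, hx⟩ = false) (h0 : 0 < x) : pkPos P x < x := by
  rcases Nat.lt_or_ge (pkPos P x) x with h | h
  · exact h
  · exfalso
    have heq : pkPos P x = x := le_antisymm (pkPos_le x) h
    obtain ⟨h1, h2⟩ := pkPos_spec (x := x) hP hn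
    have hfin : (⟨pkPos P x, h1⟩ : Fin (2 * n)) = ⟨x, hx⟩ := Fin.ext heq
    rw [hfin, hPx] at h2
    exact absurd h2 (by simp)

lemma ftPos_spec {x : ℕ} (hx : ∃ w, x < w ∧ ∃ h : w < 2 * n, P ⟨w, h⟩ = true) :
    x < ftPos P x ∧ ∃ h : ftPos P x < 2 * n, P ⟨ftPos P x, h⟩ = true := by
  obtain ⟨w, hw1, hw2, hw3⟩ := hx
  have hne : ((Finset.range (2 * n)).filter
      (fun w => x < w ∧ ∃ h : w < 2 * n, P ⟨w, h⟩ = true)).Nonempty :=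
    ⟨w, by simp only [Finset.mem_filter, Finset.mem_range]; exact ⟨hw2, hw1, hw2, hw3⟩⟩
  rw [ftPos, dif_pos hne]
  have := Finset.min'_mem _ hne
  simp only [Finset.mem_filter, Finset.mem_range] at this
  exact this.2

lemma ftPos_min {x w : ℕ} (h1 : x < w) (h2 : w < ftPos P x) (hw : w < 2 * n) :
    P ⟨w, hw⟩ = false := by
  rw [ftPos] at h2
  split_ifs at h2 with hne
  · by_contra hb
    simp only [Bool.not_eq_false] at hb
    have hmem : w ∈ (Finset.range (2 * n)).filter
        (fun w => x < w ∧ ∃ h : w < 2 * n, P ⟨w, h⟩ = true) := by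
      simp only [Finset.mem_filter, Finset.mem_range]
      exact ⟨hw, h1, hw, hb⟩
    have := Finset.min'_le _ _ hmem
    omega
  · omega

/-- existence of a `true` at or after `x` when the up-count has not reached `n` yet -/
lemma exists_later_true (hP : IsDyck P) {x : ℕ} (hx : x ≤ 2 * n)
    (h : UpCt P x < n) : ∃ w, x ≤ w ∧ ∃ h : w < 2 * n, P ⟨w, h⟩ = true := by
  by_contra hc
  push_neg at hc
  have hconst : UpCt P (2 * n) = UpCt P x := by
    apply UpCt_const_of_false hx (le_refl _)
    intro q hq1 hq2
    have h3 := hc q.val hq1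
    simp only [not_exists, ne_eq] at h3
    have h4 := h3 q.isLt
    cases hb : P q
    · rfl
    · exfalso
      apply h4
      have : (⟨q.val, q.isLt⟩ : Fin (2 * n)) = q := Fin.ext rfl
      rw [this, hb]
  rw [dyck_total hP] at hconst
  omega

end Maps
section Struct
open Finset
variable {n : ℕ} {P : Fin (2 * n) → Bool}

lemma ftPos_le {x w : ℕ} (h1 : x < w) (hw : w < 2 * n) (h2 : P ⟨w, hw⟩ = true) :
    ftPos P x ≤ w := by
  have hne : ((Finset.range (2 * n)).filter
      (fun w => x < w ∧ ∃ h : w < 2 * n, P ⟨w, h⟩ = true)).Nonempty :=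
    ⟨w, by simp only [Finset.mem_filter, Finset.mem_range]; exact ⟨hw, h1, hw, h2⟩⟩
  have hmem : w ∈ (Finset.range (2 * n)).filter
      (fun w => x < w ∧ ∃ h : w < 2 * n, P ⟨w, h⟩ = true) := by
    simp only [Finset.mem_filter, Finset.mem_range]
    exact ⟨hw, h1, hw, h2⟩
  rw [ftPos, dif_pos hne]
  exact Finset.min'_le _ _ hmem

lemma ftPos_sub_one_lt {x : ℕ} (h2n : 0 < n) : ftPos P x - 1 < 2 * n := by
  rw [ftPos]
  split_ifs with hne
  · have := Finset.min'_mem _ hne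
    simp only [Finset.mem_filter, Finset.mem_range] at this
    omega
  · omega

/-- total version of valley ↦ previous peak -/
def pkV (P : Fin (2 * n) → Bool) (v : Fin (2 * n)) : Fin (2 * n) :=
  ⟨pkPos P v.val, lt_of_le_of_lt (pkPos_le _) v.isLt⟩

/-- total version of peak ↦ next valley (requires `0 < n` to be meaningful) -/
def ftV (P : Fin (2 * n) → Bool) (hn : 0 < n) (j : Fin (2 * n)) : Fin (2 * n) :=
  ⟨ftPos P j.val - 1, ftPos_sub_one_lt hn⟩

section WithDyck
variable (hP : IsDyck P) (hn : 0 < n)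
include hP hn

lemma valley_pos {v : Fin (2 * n)} (hv : v ∈ Valleys P) : 0 < v.val := by
  rcases Nat.eq_zero_or_pos v.val with h0 | h0
  · exfalso
    have h1 := (mem_Valleys.1 hv).1
    have h2 := dyck_first hP hn
    have : v = ⟨0, by omega⟩ := Fin.ext h0
    rw [this] at h1
    rw [h1] at h2; exact absurd h2 (by simp)
  · exact h0

lemma pkV_lt {v : Fin (2 * n)} (hv : v ∈ Valleys P) : (pkV P v).val < v.val :=
  pkPos_lt hP hn v.isLt (by simpa [Fin.eta] using (mem_Valleys.1 hv).1) (valley_pos hP hn hv)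

lemma pkV_mem {v : Fin (2 * n)} (hv : v ∈ Valleys P) : pkV P v ∈ Peaks P := by
  obtain ⟨hv1, hv2, hv3⟩ := mem_Valleys.1 hv
  have hlt := pkV_lt hP hn hv
  refine mem_Peaks.2 ⟨?_, ⟨by omega, ?_⟩⟩
  · obtain ⟨h1, h2⟩ := pkPos_spec (x := v.val) hP hn
    simpa [pkV] using h2
  · exact pkPos_greatest (x := v.val) (q := (pkV P v).val + 1)
      (Nat.lt_succ_self _) (by omega) (by omega)

lemma pkV_uc {v : Fin (2 * n)} (hv : v ∈ Valleys P) :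
    UpCt P ((pkV P v).val + 1) = UpCt P (v.val + 1) := by
  have hlt := pkV_lt hP hn hv
  refine (UpCt_const_of_false (by omega) (by omega) ?_).symm
  intro q hq1 hq2
  have : P ⟨q.val, q.isLt⟩ = false :=
    pkPos_greatest (x := v.val) (q := q.val) (by simpa [pkV] using hq1) (by omega) q.isLt
  simpa [Fin.eta] using this

lemma valley_uc_lt {v : Fin (2 * n)} (hv : v ∈ Valleys P) : UpCt P (v.val + 1) < n := by
  obtain ⟨hv1, hv2, hv3⟩ := mem_Valleys.1 hv
  have h1 := UpCt_succ P hv2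
  rw [hv3] at h1
  have h2 : UpCt P (v.val + 1 + 1) ≤ UpCt P (2 * n) := UpCt_mono P (by omega)
  rw [dyck_total hP] at h2
  simp at h1
  omega

lemma peak_exists_later {j : Fin (2 * n)} (hj : j ∈ Peaks P)
    (huc : UpCt P (j.val + 1) < n) :
    ∃ w, j.val < w ∧ ∃ h : w < 2 * n, P ⟨w, h⟩ = true := by
  obtain ⟨hj1, hj2, hj3⟩ := mem_Peaks.1 hj
  obtain ⟨w, hw1, hw2, hw3⟩ := exists_later_true hP (by omega) huc
  exact ⟨w, by omega, hw2, hw3⟩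

lemma ftV_facts {j : Fin (2 * n)} (hj : j ∈ Peaks P) (huc : UpCt P (j.val + 1) < n) :
    j.val + 1 ≤ (ftV P hn j).val ∧ (ftV P hn j).val + 1 = ftPos P j.val ∧
      ftV P hn j ∈ Valleys P := by
  obtain ⟨hj1, hj2, hj3⟩ := mem_Peaks.1 hj
  have hex := peak_exists_later hP hn hj huc
  obtain ⟨hw1, hw2, hw3⟩ := ftPos_spec hex
  set w := ftPos P j.val with hwdef
  have hne : w ≠ j.val + 1 := by
    intro heq
    have : P ⟨j.val + 1, hj2⟩ = true := by
      have : (⟨w, hw2⟩ : Fin (2 * n)) = ⟨j.val + 1, hj2⟩ := Fin.ext heq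
      rw [← this]; exact hw3
    rw [this] at hj3; exact absurd hj3 (by simp)
  have hge : j.val + 2 ≤ w := by omega
  have hv1 : (ftV P hn j).val = w - 1 := rfl
  refine ⟨by omega, by omega, ?_⟩
  refine mem_Valleys.2 ⟨?_, ⟨by omega, ?_⟩⟩
  · have h5 : P ⟨w - 1, by omega⟩ = false :=
      ftPos_min (x := j.val) (w := w - 1) (by omega) (by omega) (by omega)
    have heq : (⟨w - 1, by omega⟩ : Fin (2 * n)) = ftV P hn j := Fin.ext hv1.symm
    rw [← heq]; exact h5
  · have hval : (ftV P hn j).val + 1 = w := by omega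
    have heq : (⟨(ftV P hn j).val + 1, by omega⟩ : Fin (2 * n)) = ⟨w, hw2⟩ :=
      Fin.ext hval
    rw [heq]; exact hw3

lemma ftV_mem {j : Fin (2 * n)} (hj : j ∈ Peaks P) (huc : UpCt P (j.val + 1) < n) :
    ftV P hn j ∈ Valleys P := (ftV_facts hP hn hj huc).2.2

lemma ftV_uc {j : Fin (2 * n)} (hj : j ∈ Peaks P) (huc : UpCt P (j.val + 1) < n) :
    UpCt P ((ftV P hn j).val + 1) = UpCt P (j.val + 1) := by
  obtain ⟨h1, h2, h3⟩ := ftV_facts hP hn hj huc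
  obtain ⟨hj1, hj2, hj3⟩ := mem_Peaks.1 hj
  apply UpCt_const_of_false (by omega) (by omega)
  intro q hq1 hq2
  rcases Nat.eq_or_lt_of_le hq1 with heq | hlt
  · have : q = ⟨j.val + 1, hj2⟩ := Fin.ext heq.symm
    rw [this]; exact hj3
  · have hq3 : q.val < ftPos P j.val := by omega
    have := ftPos_min (x := j.val) (w := q.val) (by omega) hq3 q.isLt
    simpa [Fin.eta] using this

/-- roundtrip: valley → peak → valley -/
lemma rt_vpv {v : Fin (2 * n)} (hv : v ∈ Valleys P) :
    ftV P hn (pkV P v) = v := by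
  obtain ⟨hv1, hv2, hv3⟩ := mem_Valleys.1 hv
  have hlt := pkV_lt hP hn hv
  have hle : ftPos P (pkV P v).val ≤ v.val + 1 := by
    apply ftPos_le (by omega) hv2
    exact hv3
  have hge : v.val + 1 ≤ ftPos P (pkV P v).val := by
    by_contra hc
    push_neg at hc
    obtain ⟨hw1, hw2, hw3⟩ := ftPos_spec (x := (pkV P v).val)
      ⟨v.val + 1, by omega, hv2, hv3⟩
    have : P ⟨ftPos P (pkV P v).val, hw2⟩ = false :=
      pkPos_greatest (x := v.val) (by simpa [pkV] using hw1) (by omega) hw2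
    rw [this] at hw3; exact absurd hw3 (by simp)
  apply Fin.ext
  show ftPos P (pkV P v).val - 1 = v.val
  omega

/-- roundtrip: peak → valley → peak -/
lemma rt_pvp {j : Fin (2 * n)} (hj : j ∈ Peaks P) (huc : UpCt P (j.val + 1) < n) :
    pkV P (ftV P hn j) = j := by
  obtain ⟨h1, h2, h3⟩ := ftV_facts hP hn hj huc
  obtain ⟨hj1, hj2, hj3⟩ := mem_Peaks.1 hj
  apply Fin.ext
  show pkPos P (ftV P hn j).val = j.val
  have hle : j.val ≤ pkPos P (ftV P hn j).val :=
    Nat.le_findGreatest (by omega) ⟨j.isLt, by simpa [Fin.eta] using hj1⟩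
  have hge : pkPos P (ftV P hn j).val ≤ j.val := by
    by_contra hc
    push_neg at hc
    obtain ⟨hq1, hq2⟩ := pkPos_spec (x := (ftV P hn j).val) hP hn
    have hub := pkPos_le (P := P) (ftV P hn j).val
    have : P ⟨pkPos P (ftV P hn j).val, hq1⟩ = false := by
      rcases Nat.eq_or_lt_of_le (show j.val + 1 ≤ pkPos P (ftV P hn j).val by omega)
        with heq | hlt
      · have : (⟨pkPos P (ftV P hn j).val, hq1⟩ : Fin (2 * n)) = ⟨j.val + 1, hj2⟩ :=
          Fin.ext heq.symm
        rw [this]; exact hj3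
      · exact ftPos_min (x := j.val) (w := pkPos P (ftV P hn j).val) (by omega) (by omega) hq1
    rw [this] at hq2; exact absurd hq2 (by simp)
  omega

end WithDyck
end Struct
section BCD
open Finset
variable {n : ℕ} {P : Fin (2 * n) → Bool} (hP : IsDyck P) (hn : 0 < n)
include hP hn

/-- the last peak, as a Fin -/
lemma lastPeak_facts :
    ∃ lp : Fin (2 * n), lp ∈ Peaks P ∧ UpCt P (lp.val + 1) = n := by
  set x := pkPos P (2 * n) with hx
  obtain ⟨h1, h2⟩ := pkPos_spec (x := 2 * n) hP hn
  have hne : x ≠ 2 * n - 1 := by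
    intro heq
    have hl := dyck_last hP hn
    have : (⟨x, h1⟩ : Fin (2 * n)) = ⟨2 * n - 1, by omega⟩ := Fin.ext heq
    rw [this, hl] at h2; exact absurd h2 (by simp)
  have hx1 : x + 1 < 2 * n := by
    have := pkPos_le (P := P) (2 * n); omega
  refine ⟨⟨x, h1⟩, mem_Peaks.2 ⟨h2, ⟨hx1, ?_⟩⟩, ?_⟩
  · exact pkPos_greatest (x := 2 * n) (q := x + 1) (by omega) (by omega) hx1
  · have : UpCt P (2 * n) = UpCt P (x + 1) := by
      apply UpCt_const_of_false (by omega) (le_refl _)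
      intro q hq1 hq2
      have := pkPos_greatest (P := P) (x := 2 * n) (q := q.val) (by omega) (by omega) q.isLt
      simpa [Fin.eta] using this
    rw [← this]; exact dyck_total hP

lemma peaks_filter_not_lt :
    ∃ lp : Fin (2 * n), (Peaks P).filter (fun j => ¬ UpCt P (j.val + 1) < n) = {lp} := by
  obtain ⟨lp, hlp1, hlp2⟩ := lastPeak_facts hP hn
  refine ⟨lp, ?_⟩
  ext j
  simp only [mem_filter, mem_singleton, not_lt]
  constructor
  · rintro ⟨hj1, hj2⟩
    have : UpCt P (j.val + 1) = n := le_antisymm (peak_uc_le hP) hj2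
    exact peak_uc_injOn hj1 hlp1 (by rw [this, hlp2])
  · rintro rfl
    exact ⟨hlp1, le_of_eq hlp2.symm⟩

/-- Lemma B: number of peaks = number of valleys + 1 -/
lemma card_peaks : (Peaks P).card = (Valleys P).card + 1 := by
  classical
  obtain ⟨lp, hlp⟩ := peaks_filter_not_lt hP hn
  have hsplit := Finset.card_filter_add_card_filter_not
    (s := Peaks P) (p := fun j => UpCt P (j.val + 1) < n)
  beta_reduce at hsplit
  have hcard1 : ((Peaks P).filter (fun j => ¬ UpCt P (j.val + 1) < n)).card = 1 := by
    rw [hlp]; exact card_singleton _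
  have hcard2 : ((Peaks P).filter (fun j => UpCt P (j.val + 1) < n)).card
      = (Valleys P).card := by
    apply Finset.card_bij' (fun j _ => ftV P hn j) (fun v _ => pkV P v)
    · intro j hj
      simp only [mem_filter] at hj
      exact ftV_mem hP hn hj.1 hj.2
    · intro v hv
      simp only [mem_filter]
      exact ⟨pkV_mem hP hn hv, by rw [pkV_uc hP hn hv]; exact valley_uc_lt hP hn hv⟩
    · intro j hj
      simp only [mem_filter] at hj
      exact rt_pvp hP hn hj.1 hj.2
    · intro v hv
      exact rt_vpv hP hn hv
  omega

/-- Lemma D: sum of up-counts over peaks = n + sum of up-counts over valleys -/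
lemma sum_peaks_uc :
    ∑ j ∈ Peaks P, UpCt P (j.val + 1) = n + ∑ v ∈ Valleys P, UpCt P (v.val + 1) := by
  classical
  obtain ⟨lp, hlp⟩ := peaks_filter_not_lt hP hn
  rw [← Finset.sum_filter_add_sum_filter_not (Peaks P)
    (fun j => UpCt P (j.val + 1) < n) (fun j => UpCt P (j.val + 1))]
  have h2 : ∑ j ∈ (Peaks P).filter (fun j => ¬ UpCt P (j.val + 1) < n),
      UpCt P (j.val + 1) = n := by
    rw [hlp, Finset.sum_singleton]
    have hmem : lp ∈ (Peaks P).filter (fun j => ¬ UpCt P (j.val + 1) < n) := by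
      rw [hlp]; exact mem_singleton_self _
    simp only [mem_filter, not_lt] at hmem
    exact le_antisymm (peak_uc_le hP) hmem.2
  have h1 : ∑ j ∈ (Peaks P).filter (fun j => UpCt P (j.val + 1) < n),
      UpCt P (j.val + 1) = ∑ v ∈ Valleys P, UpCt P (v.val + 1) := by
    apply Finset.sum_nbij' (i := fun j => ftV P hn j) (j := fun v => pkV P v)
    · intro j hj
      simp only [mem_filter] at hj
      exact ftV_mem hP hn hj.1 hj.2
    · intro v hv
      simp only [mem_filter]
      exact ⟨pkV_mem hP hn hv, by rw [pkV_uc hP hn hv]; exact valley_uc_lt hP hn hv⟩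
    · intro j hj
      simp only [mem_filter] at hj
      exact rt_pvp hP hn hj.1 hj.2
    · intro v hv
      exact rt_vpv hP hn hv
    · intro j hj
      simp only [mem_filter] at hj
      exact (ftV_uc hP hn hj.1 hj.2).symm
  omega

/-- Lemma C: counting domination -/
lemma card_peaks_lt_le {i : ℕ} (hi : i ≤ n) :
    ((Peaks P).filter (fun p => UpCt P (p.val + 1) < i)).card
      ≤ ((Valleys P).filter (fun v => DownCt P (v.val + 1) < i)).card := by
  classical
  apply Finset.card_le_card_of_injOn (fun j => ftV P hn j)
  · intro j hj
    simp only [Finset.mem_coe, mem_filter] at hj ⊢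
    have huc : UpCt P (j.val + 1) < n := by omega
    refine ⟨ftV_mem hP hn hj.1 huc, ?_⟩
    have hdc : DownCt P ((ftV P hn j).val + 1) ≤ UpCt P ((ftV P hn j).val + 1) :=
      dyck_dc_le_uc hP (by omega)
    rw [ftV_uc hP hn hj.1 huc] at hdc
    omega
  · intro a ha b hb hab
    simp only [Finset.mem_coe, mem_filter] at ha hb
    have huca : UpCt P (a.val + 1) < n := by omega
    have hucb : UpCt P (b.val + 1) < n := by omega
    have hab' : ftV P hn a = ftV P hn b := hab
    rw [← rt_pvp hP hn ha.1 huca, ← rt_pvp hP hn hb.1 hucb, hab']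

end BCD
section MkUV
open Finset
variable {n : ℕ}

/-- upper path of the polyomino associated to a Dyck path -/
def mkU (P : Fin (2 * n) → Bool) : Fin (n + 1) → Bool :=
  fun i => ! decide (∃ j ∈ Peaks P, UpCt P (j.val + 1) = i.val)

/-- lower path of the polyomino associated to a Dyck path -/
def mkV (P : Fin (2 * n) → Bool) : Fin (n + 1) → Bool :=
  fun i => ! decide (i.val = 0 ∨ ∃ j ∈ Valleys P, DownCt P (j.val + 1) = i.val)

variable {P : Fin (2 * n) → Bool}

lemma mkU_false_iff {i : Fin (n + 1)} :
    mkU P i = false ↔ ∃ j ∈ Peaks P, UpCt P (j.val + 1) = i.val := by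
  simp [mkU]

lemma mkV_false_iff {i : Fin (n + 1)} :
    mkV P i = false ↔ i.val = 0 ∨ ∃ j ∈ Valleys P, DownCt P (j.val + 1) = i.val := by
  simp only [mkV, Bool.not_eq_false', decide_eq_true_eq]

variable (hP : IsDyck P) (hn : 0 < n)
include hP hn

lemma cardDownU (i : ℕ) :
    (univ.filter fun p : Fin (n + 1) => p.val < i ∧ mkU P p = false).card
      = ((Peaks P).filter fun j => UpCt P (j.val + 1) < i).card := by
  classical
  symm
  apply Finset.card_bij
    (fun j _ => (⟨UpCt P (j.val + 1), by have := peak_uc_le (j := j) hP; omega⟩ : Fin (n + 1)))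
  · intro j hj
    simp only [mem_filter] at hj
    simp only [mem_filter, mem_univ, true_and]
    exact ⟨hj.2, mkU_false_iff.2 ⟨j, hj.1, rfl⟩⟩
  · intro a ha b hb hab
    simp only [mem_filter] at ha hb
    exact peak_uc_injOn ha.1 hb.1 (by simpa [Fin.ext_iff] using hab)
  · intro b hb
    simp only [mem_filter, mem_univ, true_and] at hb
    obtain ⟨j, hj, hjuc⟩ := mkU_false_iff.1 hb.2
    exact ⟨j, by simp only [mem_filter]; exact ⟨hj, by omega⟩, Fin.ext hjuc⟩

lemma cardDownV (i : ℕ) :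
    (univ.filter fun p : Fin (n + 1) => p.val < i ∧ mkV P p = false).card
      = ((Valleys P).filter fun j => DownCt P (j.val + 1) < i).card
        + (if 0 < i then 1 else 0) := by
  classical
  rcases Nat.eq_zero_or_pos i with h0 | h0
  · subst h0
    rw [if_neg (by omega)]
    have h1 : (univ.filter fun p : Fin (n + 1) => p.val < 0 ∧ mkV P p = false) = ∅ := by
      ext p; simp
    have h2 : ((Valleys P).filter fun j => DownCt P (j.val + 1) < 0) = ∅ := by
      ext j; simp
    rw [h1, h2]; simp
  · rw [if_pos h0]
    have hz : (⟨0, by omega⟩ : Fin (n + 1)) ∈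
        (univ.filter fun p : Fin (n + 1) => p.val < i ∧ mkV P p = false) := by
      simp only [mem_filter, mem_univ, true_and]
      exact ⟨h0, mkV_false_iff.2 (Or.inl rfl)⟩
    rw [← Finset.card_erase_add_one hz]
    congr 1
    symm
    apply Finset.card_bij
      (fun j _ => (⟨DownCt P (j.val + 1), by have := valley_dc_le (j := j) hP; omega⟩ : Fin (n + 1)))
    · intro j hj
      simp only [mem_filter] at hj
      have hdc := valley_dc_pos (P := P) (j := j) hj.1
      simp only [Finset.mem_erase, mem_filter, mem_univ, true_and]
      refine ⟨by intro hc; have := congrArg Fin.val hc; simp at this; omega, hj.2, ?_⟩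
      exact mkV_false_iff.2 (Or.inr ⟨j, hj.1, rfl⟩)
    · intro a ha b hb hab
      simp only [mem_filter] at ha hb
      exact valley_dc_injOn ha.1 hb.1 (by simpa [Fin.ext_iff] using hab)
    · intro b hb
      simp only [Finset.mem_erase, mem_filter, mem_univ, true_and] at hb
      have hb0 : b.val ≠ 0 := by
        intro hc; exact hb.1 (Fin.ext hc)
      rcases mkV_false_iff.1 hb.2.2 with h | ⟨j, hj, hjdc⟩
      · exact absurd h hb0
      · exact ⟨j, by simp only [mem_filter]; exact ⟨hj, by omega⟩, Fin.ext hjdc⟩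

/-- the fundamental counting identity for `mkU` -/
lemma FU {i : ℕ} (hi : i ≤ n + 1) :
    UpCt (mkU P) i + ((Peaks P).filter fun j => UpCt P (j.val + 1) < i).card = i := by
  have h1 := UpCt_add_DownCt (mkU P) hi
  have h2 : DownCt (mkU P) i
      = (univ.filter fun p : Fin (n + 1) => p.val < i ∧ mkU P p = false).card := rfl
  rw [h2, cardDownU hP hn] at h1
  exact h1

/-- the fundamental counting identity for `mkV` -/
lemma FV {i : ℕ} (hi : i ≤ n + 1) :
    UpCt (mkV P) i + ((Valleys P).filter fun j => DownCt P (j.val + 1) < i).card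
      + (if 0 < i then 1 else 0) = i := by
  have h1 := UpCt_add_DownCt (mkV P) hi
  have h2 : DownCt (mkV P) i
      = (univ.filter fun p : Fin (n + 1) => p.val < i ∧ mkV P p = false).card := rfl
  rw [h2, cardDownV hP hn] at h1
  omega

lemma peaks_filter_full :
    ((Peaks P).filter fun j => UpCt P (j.val + 1) < n + 1) = Peaks P := by
  apply Finset.filter_true_of_mem
  intro j hj
  have := peak_uc_le (j := j) hP
  omega

lemma valleys_filter_full :
    ((Valleys P).filter fun j => DownCt P (j.val + 1) < n + 1) = Valleys P := by
  apply Finset.filter_true_of_mem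
  intro j hj
  have := valley_dc_le (j := j) hP
  omega

lemma mkUV_para : IsParaPoly (mkU P) (mkV P) := by
  classical
  have hBig := card_peaks hP hn
  refine ⟨?_, ?_, ?_, ?_⟩
  · -- same number of N steps
    have h1 := FU hP hn (le_refl (n + 1))
    have h2 := FV hP hn (le_refl (n + 1))
    rw [peaks_filter_full hP hn] at h1
    rw [valleys_filter_full hP hn] at h2
    rw [if_pos (by omega : 0 < n + 1)] at h2
    omega
  · -- strict domination
    intro i hi h1i
    have h1 := FU hP hn (by omega : i ≤ n + 1)
    have h2 := FV hP hn (by omega : i ≤ n + 1)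
    rw [if_pos (by omega : 0 < i)] at h2
    have h3 := card_peaks_lt_le hP hn (by omega : i ≤ n)
    omega
  · -- V starts with an E step
    have h2 := FV hP hn (by omega : 1 ≤ n + 1)
    rw [if_pos (by omega : (0:ℕ) < 1)] at h2
    have hemp : ((Valleys P).filter fun j => DownCt P (j.val + 1) < 1) = ∅ := by
      ext j
      simp only [mem_filter, Finset.notMem_empty, iff_false, not_and, not_lt]
      intro hj
      exact valley_dc_pos hj
    rw [hemp] at h2
    simpa using h2
  · -- U ends with an E step
    have h1 := FU hP hn (le_refl (n + 1))
    have h2 := FU hP hn (by omega : n ≤ n + 1)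
    rw [peaks_filter_full hP hn] at h1
    obtain ⟨lp, hlp⟩ := peaks_filter_not_lt hP hn
    have hsplit := Finset.card_filter_add_card_filter_not
      (s := Peaks P) (p := fun j => UpCt P (j.val + 1) < n)
    beta_reduce at hsplit
    rw [hlp] at hsplit
    simp only [card_singleton] at hsplit
    simp only [Nat.add_sub_cancel]
    omega

end MkUV
section Stats
open Finset

/-- sum of ranks of an injective function on a finset -/
lemma sum_rank {ι : Type*} [DecidableEq ι] (S : Finset ι) (f : ι → ℕ)
    (hf : Set.InjOn f S) :
    ∑ s ∈ S, (S.filter fun t => f t < f s).card = S.card.choose 2 := by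
  classical
  induction S using Finset.induction_on with
  | empty => simp
  | @insert a S ha ih =>
    have hfS : Set.InjOn f S := hf.mono (by simp [Finset.coe_insert, Set.subset_insert])
    rw [Finset.sum_insert ha]
    have hterm : ∀ s ∈ insert a S, ((insert a S).filter fun t => f t < f s).card
        = (S.filter fun t => f t < f s).card + (if f a < f s then 1 else 0) := by
      intro s _
      rw [Finset.filter_insert]
      split_ifs with h
      · rw [Finset.card_insert_of_notMem (fun hc => ha (Finset.mem_filter.1 hc).1)]
      · rfl
    have hself : ¬ f a < f a := lt_irrefl _
    rw [hterm a (mem_insert_self a S), if_neg hself, add_zero]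
    rw [Finset.sum_congr rfl (fun s hs => hterm s (mem_insert_of_mem hs))]
    rw [Finset.sum_add_distrib, ih hfS]
    have hsplit : (S.filter fun s => f a < f s).card + (S.filter fun s => f s < f a).card
        = S.card := by
      have h1 := Finset.card_filter_add_card_filter_not
        (s := S) (p := fun s => f a < f s)
      beta_reduce at h1
      have h2 : (S.filter fun s => ¬ f a < f s) = (S.filter fun s => f s < f a) := by
        apply Finset.filter_congr
        intro s hs
        have hne : f s ≠ f a := fun hc =>
          ha (by rwa [hf (by simp [hs]) (by simp) hc] at hs)
        constructor
        · intro h; omega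
        · intro h; omega
      rw [h2] at h1
      exact h1
    have hsb : ∑ s ∈ S, (if f a < f s then 1 else 0) = (S.filter fun s => f a < f s).card := by
      rw [Finset.sum_boole]; simp
    rw [hsb]
    rw [Finset.card_insert_of_notMem ha]
    have hcs : (S.card + 1).choose 2 = S.card.choose 1 + S.card.choose 2 :=
      Nat.choose_succ_succ _ _
    rw [Nat.choose_one_right] at hcs
    omega

variable {n : ℕ} {P : Fin (2 * n) → Bool} (hP : IsDyck P) (hn : 0 < n)
include hP hn

lemma eSumU_eq :
    eSum (mkU P) + (∑ j ∈ Peaks P, ((Peaks P).filter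
        fun t => UpCt P (t.val + 1) < UpCt P (j.val + 1)).card)
      = ∑ j ∈ Peaks P, UpCt P (j.val + 1) := by
  classical
  have hbij : eSum (mkU P) = ∑ j ∈ Peaks P, UpCt (mkU P) (UpCt P (j.val + 1)) := by
    symm
    apply Finset.sum_bij
      (fun j _ => (⟨UpCt P (j.val + 1), by have := peak_uc_le (j := j) hP; omega⟩ : Fin (n + 1)))
    · intro j hj
      simp only [mem_filter, mem_univ, true_and]
      exact mkU_false_iff.2 ⟨j, hj, rfl⟩
    · intro a ha b hb hab
      exact peak_uc_injOn ha hb (by simpa [Fin.ext_iff] using hab)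
    · intro b hb
      simp only [mem_filter, mem_univ, true_and] at hb
      obtain ⟨j, hj, hjuc⟩ := mkU_false_iff.1 hb
      exact ⟨j, hj, Fin.ext hjuc⟩
    · intro j hj
      rfl
  rw [hbij, ← Finset.sum_add_distrib]
  apply Finset.sum_congr rfl
  intro j hj
  exact FU hP hn (by have := peak_uc_le (j := j) hP; omega)

lemma eSumV_eq :
    eSum (mkV P) + (∑ v ∈ Valleys P, ((Valleys P).filter
        fun t => DownCt P (t.val + 1) < DownCt P (v.val + 1)).card) + (Valleys P).card
      = ∑ v ∈ Valleys P, DownCt P (v.val + 1) := by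
  classical
  have hz : (⟨0, by omega⟩ : Fin (n + 1)) ∈ univ.filter (fun j : Fin (n+1) => mkV P j = false) := by
    simp only [mem_filter, mem_univ, true_and]
    exact mkV_false_iff.2 (Or.inl rfl)
  have hsplit : eSum (mkV P) = UpCt (mkV P) 0
      + ∑ p ∈ (univ.filter (fun j : Fin (n+1) => mkV P j = false)).erase ⟨0, by omega⟩,
          UpCt (mkV P) p.val := by
    rw [eSum, ← Finset.add_sum_erase _ _ hz]
  have hbij : ∑ p ∈ (univ.filter (fun j : Fin (n+1) => mkV P j = false)).erase ⟨0, by omega⟩,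
      UpCt (mkV P) p.val = ∑ v ∈ Valleys P, UpCt (mkV P) (DownCt P (v.val + 1)) := by
    symm
    apply Finset.sum_bij
      (fun v _ => (⟨DownCt P (v.val + 1), by have := valley_dc_le (j := v) hP; omega⟩ : Fin (n + 1)))
    · intro v hv
      have hdc := valley_dc_pos (P := P) (j := v) hv
      simp only [Finset.mem_erase, mem_filter, mem_univ, true_and]
      refine ⟨by intro hc; have := congrArg Fin.val hc; simp at this; omega, ?_⟩
      exact mkV_false_iff.2 (Or.inr ⟨v, hv, rfl⟩)
    · intro a ha b hb hab
      exact valley_dc_injOn ha hb (by simpa [Fin.ext_iff] using hab)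
    · intro b hb
      simp only [Finset.mem_erase, mem_filter, mem_univ, true_and] at hb
      have hb0 : b.val ≠ 0 := fun hc => hb.1 (Fin.ext hc)
      rcases mkV_false_iff.1 hb.2 with h | ⟨v, hv, hvdc⟩
      · exact absurd h hb0
      · exact ⟨v, hv, Fin.ext hvdc⟩
    · intro v hv
      rfl
  rw [hsplit, hbij, UpCt_zero, zero_add]
  have hsum : ∑ v ∈ Valleys P, (UpCt (mkV P) (DownCt P (v.val + 1))
      + ((Valleys P).filter fun t => DownCt P (t.val + 1) < DownCt P (v.val + 1)).card + 1)
      = ∑ v ∈ Valleys P, DownCt P (v.val + 1) := by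
    apply Finset.sum_congr rfl
    intro v hv
    have hle : DownCt P (v.val + 1) ≤ n + 1 := by have := valley_dc_le (j := v) hP; omega
    have h := FV hP hn hle
    rw [if_pos (show 0 < DownCt P (v.val + 1) from valley_dc_pos hv)] at h
    exact h
  rw [← hsum, Finset.sum_add_distrib, Finset.sum_add_distrib, Finset.sum_const, smul_eq_mul,
    mul_one]

lemma beta_le_alpha' : betaPath P ≤ alphaPath P := by
  apply Finset.sum_le_sum
  intro v hv
  exact dyck_dc_le_uc hP (by omega)

lemma area_eq : areaPoly (mkU P) (mkV P) = n + (alphaPath P - betaPath P) := by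
  classical
  have hA := eSumU_eq hP hn
  have hB := eSumV_eq hP hn
  have hD := sum_peaks_uc hP hn
  have hk := card_peaks hP hn
  have hSU : (∑ j ∈ Peaks P, ((Peaks P).filter
      fun t => UpCt P (t.val + 1) < UpCt P (j.val + 1)).card) = (Peaks P).card.choose 2 :=
    sum_rank (Peaks P) (fun j => UpCt P (j.val + 1))
      (fun a ha b hb h => peak_uc_injOn (by simpa using ha) (by simpa using hb) h)
  have hSV : (∑ v ∈ Valleys P, ((Valleys P).filter
      fun t => DownCt P (t.val + 1) < DownCt P (v.val + 1)).card)
      = (Valleys P).card.choose 2 :=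
    sum_rank (Valleys P) (fun v => DownCt P (v.val + 1))
      (fun a ha b hb h => valley_dc_injOn (by simpa using ha) (by simpa using hb) h)
  have hch : ((Valleys P).card + 1).choose 2
      = (Valleys P).card.choose 1 + (Valleys P).card.choose 2 :=
    Nat.choose_succ_succ _ _
  rw [Nat.choose_one_right] at hch
  have hba : betaPath P ≤ alphaPath P := beta_le_alpha' hP hn
  have halpha : alphaPath P = ∑ v ∈ Valleys P, UpCt P (v.val + 1) := rfl
  have hbeta : betaPath P = ∑ v ∈ Valleys P, DownCt P (v.val + 1) := rfl
  show eSum (mkU P) - eSum (mkV P) = n + (alphaPath P - betaPath P)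
  rw [hSU] at hA
  rw [hSV] at hB
  rw [hk, hch] at hA
  rw [← halpha] at hD
  rw [← hbeta] at hB
  omega

lemma col_eq : colPoly (mkU P) = desPath P + 1 := by
  classical
  have h1 : colPoly (mkU P)
      = (univ.filter fun p : Fin (n + 1) => p.val < n + 1 ∧ mkU P p = false).card := by
    rw [colPoly]
    congr 1
    apply Finset.filter_congr
    intro p _
    simp [p.isLt]
  rw [h1, cardDownU hP hn, peaks_filter_full hP hn, card_peaks hP hn]
  rfl

end Stats
section Inj
open Finset
variable {n : ℕ} {P : Fin (2 * n) → Bool} (hP : IsDyck P) (hn : 0 < n)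
include hP hn

lemma DownCt_succ_false' {i : ℕ} (h : i < 2 * n) (hf : P ⟨i, h⟩ = false) :
    DownCt P (i + 1) = DownCt P i + 1 := by
  rw [DownCt_succ P h, hf]; simp

lemma UpCt_succ_false' {i : ℕ} (h : i < 2 * n) (hf : P ⟨i, h⟩ = false) :
    UpCt P (i + 1) = UpCt P i := by
  rw [UpCt_succ P h, hf]; simp

lemma UpCt_succ_true' {i : ℕ} (h : i < 2 * n) (ht : P ⟨i, h⟩ = true) :
    UpCt P (i + 1) = UpCt P i + 1 := by
  rw [UpCt_succ P h, ht]; simp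

lemma pkV_lt' {v : Fin (2 * n)} (hvF : P v = false) (hv0 : 0 < v.val) :
    (pkV P v).val < v.val :=
  pkPos_lt hP hn v.isLt (by simpa [Fin.eta] using hvF) hv0

lemma pkV_mem' {v : Fin (2 * n)} (hvF : P v = false) (hv0 : 0 < v.val) :
    pkV P v ∈ Peaks P := by
  have hlt := pkV_lt' hP hn hvF hv0
  refine mem_Peaks.2 ⟨?_, ⟨by omega, ?_⟩⟩
  · obtain ⟨h1, h2⟩ := pkPos_spec (x := v.val) hP hn
    simpa [pkV] using h2
  · exact pkPos_greatest (x := v.val) (q := (pkV P v).val + 1)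
      (Nat.lt_succ_self _) (by omega) (by omega)

lemma pkV_uc' {v : Fin (2 * n)} (hvF : P v = false) (hv0 : 0 < v.val) :
    UpCt P ((pkV P v).val + 1) = UpCt P (v.val + 1) := by
  have hlt := pkV_lt' hP hn hvF hv0
  refine (UpCt_const_of_false (by omega) (by omega) ?_).symm
  intro q hq1 hq2
  have : P ⟨q.val, q.isLt⟩ = false :=
    pkPos_greatest (x := v.val) (q := q.val) (by simpa [pkV] using hq1) (by omega) q.isLt
  simpa [Fin.eta] using this

lemma uc_le_n {x : ℕ} (hx : x ≤ 2 * n) : UpCt P x ≤ n := by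
  have := UpCt_mono P hx
  rw [dyck_total hP] at this
  exact this

lemma dc_le_n {x : ℕ} (hx : x ≤ 2 * n) : DownCt P x ≤ n := by
  have h1 := DownCt_mono P hx
  have h2 := UpCt_add_DownCt P (le_refl (2 * n))
  have h3 := hP.2
  omega

/-- Lemma G1: valleys with small down-counts are exactly the valleys before `j` -/
lemma G1 (j : Fin (2 * n)) :
    ((Valleys P).filter fun v => DownCt P (v.val + 1) ≤ DownCt P j.val)
      = ((Valleys P).filter fun v => v.val < j.val) := by
  apply Finset.filter_congr
  intro v hv
  obtain ⟨hv1, hv2, hv3⟩ := mem_Valleys.1 hv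
  constructor
  · intro h
    by_contra hc
    push_neg at hc
    have h1 : DownCt P j.val ≤ DownCt P v.val := DownCt_mono P hc
    have h2 := DownCt_succ_false' hP hn v.isLt hv1
    omega
  · intro h
    exact DownCt_mono P (by omega)

/-- Lemma H: peaks with small up-counts correspond to valleys ending before `x` -/
lemma lemH {x : ℕ} (hx : x ≤ 2 * n) :
    ((Peaks P).filter fun p => UpCt P (p.val + 1) < UpCt P x).card
      = ((Valleys P).filter fun v => v.val + 1 < x).card := by
  classical
  apply Finset.card_bij (fun p _ => ftV P hn p)
  · intro p hp
    simp only [mem_filter] at hp ⊢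
    have hucn : UpCt P (p.val + 1) < n := lt_of_lt_of_le hp.2 (uc_le_n hP hn hx)
    obtain ⟨hf1, hf2, hf3⟩ := ftV_facts hP hn hp.1 hucn
    refine ⟨hf3, ?_⟩
    -- show ftPos P p.val < x
    by_contra hc
    push_neg at hc
    have hple : p.val + 1 ≤ x := by
      by_contra hc2
      push_neg at hc2
      have := UpCt_mono P (show x ≤ p.val + 1 by omega)
      omega
    have hconst : UpCt P x = UpCt P (p.val + 1) := by
      apply UpCt_const_of_false hple hx
      intro q hq1 hq2
      have hq1' : p.val < q.val := by omega
      have hq2' : q.val < ftPos P p.val := by omega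
      have := ftPos_min (x := p.val) (w := q.val) hq1' hq2' q.isLt
      simpa [Fin.eta] using this
    omega
  · intro a ha b hb hab
    simp only [mem_filter] at ha hb
    have huca : UpCt P (a.val + 1) < n := lt_of_lt_of_le ha.2 (uc_le_n hP hn hx)
    have hucb : UpCt P (b.val + 1) < n := lt_of_lt_of_le hb.2 (uc_le_n hP hn hx)
    rw [← rt_pvp hP hn ha.1 huca, ← rt_pvp hP hn hb.1 hucb, hab]
  · intro v hv
    simp only [mem_filter] at hv
    obtain ⟨hv0, hv1⟩ := hv
    obtain ⟨hw1, hw2, hw3⟩ := mem_Valleys.1 hv0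
    refine ⟨pkV P v, ?_, rt_vpv hP hn hv0⟩
    simp only [mem_filter]
    refine ⟨pkV_mem hP hn hv0, ?_⟩
    rw [pkV_uc hP hn hv0]
    have h1 := UpCt_succ P hw2
    rw [hw3] at h1
    simp at h1
    have h2 : UpCt P (v.val + 1 + 1) ≤ UpCt P x := UpCt_mono P (by omega)
    omega

/-- Lemma E: characterization of `false` positions from peak/valley statistics -/
lemma lemE (j : Fin (2 * n)) :
    P j = false ↔
      ((∃ p ∈ Peaks P, UpCt P (p.val + 1) = UpCt P j.val) ∧
        ((Valleys P).filter fun v => DownCt P (v.val + 1) ≤ DownCt P j.val).card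
          = ((Peaks P).filter fun p => UpCt P (p.val + 1) < UpCt P j.val).card) := by
  classical
  rw [G1 hP hn j, lemH hP hn (le_of_lt j.isLt)]
  constructor
  · intro hjF
    have hj0 : 0 < j.val := by
      by_contra hc
      push_neg at hc
      have : j = ⟨0, by omega⟩ := Fin.ext (show j.val = 0 by omega)
      rw [this] at hjF
      rw [dyck_first hP hn] at hjF
      exact absurd hjF (by simp)
    have hucj : UpCt P (j.val + 1) = UpCt P j.val := UpCt_succ_false' hP hn j.isLt hjF
    constructor
    · exact ⟨pkV P j, pkV_mem' hP hn hjF hj0, by rw [pkV_uc' hP hn hjF hj0, hucj]⟩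
    · congr 1
      apply Finset.filter_congr
      intro v hv
      constructor
      · intro h
        rcases Nat.lt_or_ge (v.val + 1) j.val with h' | h'
        · exact h'
        · exfalso
          have hveq : v.val + 1 = j.val := by omega
          obtain ⟨hv1, hv2, hv3⟩ := mem_Valleys.1 hv
          have : (⟨v.val + 1, hv2⟩ : Fin (2 * n)) = j := Fin.ext hveq
          rw [this] at hv3
          rw [hv3] at hjF
          exact absurd hjF (by simp)
      · intro h; omega
  · rintro ⟨⟨p, hp, hpuc⟩, hB⟩
    by_contra hjT
    simp only [Bool.not_eq_false] at hjT
    have hucj : UpCt P (j.val + 1) = UpCt P j.val + 1 := UpCt_succ_true' hP hn j.isLt hjT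
    -- p is strictly before j
    have hpj : p.val + 1 ≤ j.val := by
      by_contra hc
      push_neg at hc
      have : UpCt P (j.val + 1) ≤ UpCt P (p.val + 1) := UpCt_mono P (by omega)
      omega
    have hj0 : 0 < j.val := by omega
    -- the position j-1 carries false
    have hjm1 : P ⟨j.val - 1, by omega⟩ = false := by
      rcases Nat.eq_or_lt_of_le hpj with heq | hlt
      · exfalso
        obtain ⟨hp1, hp2, hp3⟩ := mem_Peaks.1 hp
        have heqf : (⟨p.val + 1, hp2⟩ : Fin (2 * n)) = j := Fin.ext heq
        rw [heqf] at hp3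
        rw [hp3] at hjT
        exact absurd hjT (by simp)
      · -- all letters in [p+1, j) are false, else up-count contradiction
        by_contra hc
        simp only [Bool.not_eq_false] at hc
        have h1 : UpCt P j.val ≤ UpCt P (p.val + 1) := le_of_eq hpuc.symm
        have h2 : UpCt P (j.val - 1 + 1) ≤ UpCt P j.val := UpCt_mono P (by omega)
        have h3 := UpCt_succ_true' hP hn (show j.val - 1 < 2 * n by omega) hc
        have h4 : UpCt P (p.val + 1) ≤ UpCt P (j.val - 1) := UpCt_mono P (by omega)
        omega
    -- so j-1 is a valley
    have hvmem : (⟨j.val - 1, by omega⟩ : Fin (2 * n)) ∈ Valleys P := by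
      refine mem_Valleys.2 ⟨hjm1, ⟨show j.val - 1 + 1 < 2 * n by omega, ?_⟩⟩
      have : (⟨j.val - 1 + 1, by omega⟩ : Fin (2 * n)) = j :=
        Fin.ext (show j.val - 1 + 1 = j.val by omega)
      rw [this]; exact hjT
    -- count contradiction
    have hsplit : ((Valleys P).filter fun v => v.val < j.val)
        = insert (⟨j.val - 1, by omega⟩ : Fin (2 * n))
            ((Valleys P).filter fun v => v.val + 1 < j.val) := by
      ext v
      simp only [mem_filter, Finset.mem_insert]
      constructor
      · rintro ⟨h1, h2⟩
        rcases Nat.lt_or_ge (v.val + 1) j.val with h' | h'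
        · exact Or.inr ⟨h1, h'⟩
        · exact Or.inl (Fin.ext (show v.val = j.val - 1 by omega))
      · rintro (rfl | ⟨h1, h2⟩)
        · exact ⟨hvmem, show j.val - 1 < j.val by omega⟩
        · exact ⟨h1, by omega⟩
    have hnotmem : (⟨j.val - 1, by omega⟩ : Fin (2 * n)) ∉
        ((Valleys P).filter fun v => v.val + 1 < j.val) := by
      simp only [mem_filter]
      rintro ⟨-, h⟩
      have h' : j.val - 1 + 1 < j.val := h
      omega
    rw [hsplit, Finset.card_insert_of_notMem hnotmem] at hB
    omega

end Inj
section Injective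
open Finset
variable {n : ℕ}

lemma mk_injective {P Q : Fin (2 * n) → Bool} (hP : IsDyck P) (hQ : IsDyck Q)
    (hn : 0 < n) (hU : mkU P = mkU Q) (hV : mkV P = mkV Q) : P = Q := by
  classical
  suffices H : ∀ x : ℕ, ∀ j : Fin (2 * n), j.val = x → P j = Q j by
    funext j; exact H j.val j rfl
  intro x
  induction x using Nat.strong_induction_on with
  | _ x ih =>
    rintro j rfl
    have hpre : ∀ q : Fin (2 * n), q.val < j.val → P q = Q q :=
      fun q hq => ih q.val hq q rfl
    have huc : UpCt P j.val = UpCt Q j.val := UpCt_ext hpre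
    have hdc : DownCt P j.val = DownCt Q j.val := DownCt_ext hpre
    have hucn : UpCt P j.val ≤ n := uc_le_n hP hn (by omega)
    have hucn' : UpCt Q j.val ≤ n := uc_le_n hQ hn (by omega)
    have hdcn : DownCt P j.val ≤ n := dc_le_n hP hn (by omega)
    have hdcn' : DownCt Q j.val ≤ n := dc_le_n hQ hn (by omega)
    -- transfer of the peak-value condition
    have e1 : mkU P ⟨UpCt P j.val, by omega⟩ = mkU Q ⟨UpCt Q j.val, by omega⟩ := by
      rw [hU]
      congr 1
      exact Fin.ext huc
    have hA : (∃ p ∈ Peaks P, UpCt P (p.val + 1) = UpCt P j.val)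
        ↔ (∃ p ∈ Peaks Q, UpCt Q (p.val + 1) = UpCt Q j.val) := by
      constructor
      · intro h
        have h1 : mkU P ⟨UpCt P j.val, by omega⟩ = false := mkU_false_iff.2 h
        rw [e1] at h1
        exact mkU_false_iff.1 h1
      · intro h
        have h1 : mkU Q ⟨UpCt Q j.val, by omega⟩ = false := mkU_false_iff.2 h
        rw [← e1] at h1
        exact mkU_false_iff.1 h1
    -- transfer of the counting condition
    have hfiltP : ((Valleys P).filter fun v => DownCt P (v.val + 1) < DownCt P j.val + 1)
        = ((Valleys P).filter fun v => DownCt P (v.val + 1) ≤ DownCt P j.val) := by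
      apply Finset.filter_congr
      intro v _
      exact Nat.lt_succ_iff
    have hfiltQ : ((Valleys Q).filter fun v => DownCt Q (v.val + 1) < DownCt Q j.val + 1)
        = ((Valleys Q).filter fun v => DownCt Q (v.val + 1) ≤ DownCt Q j.val) := by
      apply Finset.filter_congr
      intro v _
      exact Nat.lt_succ_iff
    have cVP := FV hP hn (show DownCt P j.val + 1 ≤ n + 1 by omega)
    have cVQ := FV hQ hn (show DownCt Q j.val + 1 ≤ n + 1 by omega)
    rw [hfiltP, if_pos (by omega : 0 < DownCt P j.val + 1)] at cVP
    rw [hfiltQ, if_pos (by omega : 0 < DownCt Q j.val + 1)] at cVQ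
    have cUP := FU hP hn (show UpCt P j.val ≤ n + 1 by omega)
    have cUQ := FU hQ hn (show UpCt Q j.val ≤ n + 1 by omega)
    have hv2 : UpCt (mkV P) (DownCt P j.val + 1) = UpCt (mkV Q) (DownCt Q j.val + 1) := by
      rw [hV, hdc]
    have hu2 : UpCt (mkU P) (UpCt P j.val) = UpCt (mkU Q) (UpCt Q j.val) := by
      rw [hU, huc]
    have heqV : ((Valleys P).filter fun v => DownCt P (v.val + 1) ≤ DownCt P j.val).card
        = ((Valleys Q).filter fun v => DownCt Q (v.val + 1) ≤ DownCt Q j.val).card := by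
      omega
    have heqU : ((Peaks P).filter fun p => UpCt P (p.val + 1) < UpCt P j.val).card
        = ((Peaks Q).filter fun p => UpCt Q (p.val + 1) < UpCt Q j.val).card := by
      omega
    have hPQ : P j = false ↔ Q j = false := by
      rw [lemE hP hn j, lemE hQ hn j, heqV, heqU]
      exact and_congr hA Iff.rfl
    cases hp : P j <;> cases hq : Q j <;> simp_all

end Injective
section Psi
open Finset
variable {n : ℕ}

/-- interleaving map from polyominoes to words -/
def psi1 (U V : Fin (n + 1) → Bool) : Fin (2 * n) → Bool :=
  fun j => if 2 ∣ j.val then ! V ⟨j.val / 2, by have := j.isLt; omega⟩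
    else U ⟨(j.val + 1) / 2, by have := j.isLt; omega⟩

variable {U V : Fin (n + 1) → Bool}

lemma psi1_even {i : ℕ} (h : 2 * i < 2 * n) (hi : i < n + 1) :
    psi1 U V ⟨2 * i, h⟩ = ! V ⟨i, hi⟩ := by
  simp only [psi1]
  rw [if_pos (show 2 ∣ 2 * i from ⟨i, rfl⟩)]
  exact congrArg (fun x => ! V x) (Fin.ext (show 2 * i / 2 = i by omega))

lemma psi1_odd {i : ℕ} (h : 2 * i + 1 < 2 * n) (hi : i + 1 < n + 1) :
    psi1 U V ⟨2 * i + 1, h⟩ = U ⟨i + 1, hi⟩ := by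
  simp only [psi1]
  rw [if_neg (show ¬ 2 ∣ 2 * i + 1 by omega)]
  exact congrArg U (Fin.ext (show (2 * i + 1 + 1) / 2 = i + 1 by omega))

/-- counting formulas for the interleaving -/
lemma psi1_count (hn : 0 < n) {i : ℕ} (hi : i ≤ n) :
    (UpCt (psi1 U V) (2 * i) + UpCt V i + UpCt U 1 = i + UpCt U (i + 1)) ∧
    (2 * i + 1 ≤ 2 * n →
      UpCt (psi1 U V) (2 * i + 1) + UpCt V (i + 1) + UpCt U 1 = (i + 1) + UpCt U (i + 1)) := by
  induction i with
  | zero =>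
    constructor
    · simp [UpCt_zero]
    · intro h
      have h0 : (0 : ℕ) < 2 * n := by omega
      have hz : (0 : ℕ) < n + 1 := by omega
      have e1 : UpCt (psi1 U V) (2 * 0 + 1)
          = UpCt (psi1 U V) 0 + if psi1 U V ⟨0, h0⟩ = true then 1 else 0 :=
        UpCt_succ (psi1 U V) h0
      have e2 : psi1 U V ⟨0, h0⟩ = ! V ⟨0, hz⟩ := psi1_even h0 hz
      have e3 : UpCt V (0 + 1) = UpCt V 0 + if V ⟨0, hz⟩ = true then 1 else 0 :=
        UpCt_succ V hz
      rw [e2] at e1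
      simp only [UpCt_zero] at e1 e3 ⊢
      have e5 : UpCt U (0 + 1) = UpCt U 1 := rfl
      cases hb : V ⟨0, hz⟩ <;>
        (rw [hb] at e1 e3; simp at e1 e3 ⊢; try omega)
  | succ k ihk =>
    have hk : k ≤ n := by omega
    obtain ⟨ihe, iho⟩ := ihk hk
    have hodd : 2 * k + 1 ≤ 2 * n := by omega
    have ho := iho hodd
    have heven : UpCt (psi1 U V) (2 * (k + 1)) + UpCt V (k + 1) + UpCt U 1
        = (k + 1) + UpCt U (k + 1 + 1) := by
      have h1 : 2 * k + 1 < 2 * n := by omega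
      have e1 := UpCt_succ (psi1 U V) h1
      have e2 : psi1 U V ⟨2 * k + 1, h1⟩ = U ⟨k + 1, by omega⟩ := psi1_odd h1 (by omega)
      have e3 := UpCt_succ U (show k + 1 < n + 1 by omega)
      rw [e2] at e1
      have hx : 2 * (k + 1) = 2 * k + 1 + 1 := by ring
      rw [hx]
      cases hb : U ⟨k + 1, by omega⟩ <;> rw [hb] at e1 e3 <;> simp at e1 e3 <;> omega
    refine ⟨heven, ?_⟩
    intro h
    have h1 : 2 * (k + 1) < 2 * n := by omega
    have e1 := UpCt_succ (psi1 U V) h1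
    have e2 : psi1 U V ⟨2 * (k + 1), h1⟩ = ! V ⟨k + 1, by omega⟩ := psi1_even h1 (by omega)
    have e3 := UpCt_succ V (show k + 1 < n + 1 by omega)
    rw [e2] at e1
    cases hb : V ⟨k + 1, by omega⟩ <;> rw [hb] at e1 e3 <;> simp at e1 e3 <;> omega

lemma para_u1 (hpara : IsParaPoly U V) (hn : 0 < n) : UpCt U 1 = 1 := by
  obtain ⟨hend, hdom, hV1, hUend⟩ := hpara
  have h1 := hdom 1 (by omega) (le_refl 1)
  have h2 := UpCt_le U 1
  omega

lemma para_vn (hpara : IsParaPoly U V) (hn : 0 < n) :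
    UpCt V (n + 1) = UpCt V n + 1 ∧ UpCt U (n + 1) = UpCt V n + 1 := by
  obtain ⟨hend, hdom, hV1, hUend⟩ := hpara
  have h1 := hdom n (by omega) (by omega)
  have h2 : UpCt U n ≤ UpCt U (n + 1) := UpCt_mono U (by omega)
  have h3 := UpCt_succ V (show n < n + 1 by omega)
  have h4 : (if V ⟨n, by omega⟩ = true then 1 else 0) ≤ 1 := by
    split_ifs <;> omega
  omega

lemma psi1_dyck (hpara : IsParaPoly U V) (hn : 0 < n) : IsDyck (psi1 U V) := by
  have hu1 := para_u1 hpara hn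
  obtain ⟨hvn, hun⟩ := para_vn hpara hn
  obtain ⟨hend, hdom, hV1, hUend⟩ := hpara
  constructor
  · intro i hi
    have hsum := UpCt_add_DownCt (psi1 U V) hi
    rcases Nat.even_or_odd i with ⟨k, hk⟩ | ⟨k, hk⟩
    · have hk2' : i = 2 * k := by omega
      subst hk2'
      have hk2 : k ≤ n := by omega
      have he := (psi1_count (U := U) (V := V) hn hk2).1
      rcases Nat.eq_zero_or_pos k with rfl | hkpos
      · simp only [Nat.mul_zero, UpCt_zero, DownCt_zero] at *
        omega
      · have hd := hdom k (by omega) hkpos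
        have h2 : UpCt U k ≤ UpCt U (k + 1) := UpCt_mono U (by omega)
        omega
    · subst hk
      have hk2 : k < n := by omega
      have ho := (psi1_count (U := U) (V := V) hn (by omega : k ≤ n)).2 (by omega)
      have hd := hdom (k + 1) (by omega) (by omega)
      omega
  · have hsum := UpCt_add_DownCt (psi1 U V) (le_refl (2 * n))
    have he := (psi1_count (U := U) (V := V) hn (le_refl n)).1
    omega

lemma psi1_inj {U' V' : Fin (n + 1) → Bool} (hpara : IsParaPoly U V)
    (hpara' : IsParaPoly U' V') (hn : 0 < n)
    (heq : psi1 U V = psi1 U' V') : U = U' ∧ V = V' := by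
  have hu1 := para_u1 hpara hn
  have hu1' := para_u1 hpara' hn
  obtain ⟨hvn, -⟩ := para_vn hpara hn
  obtain ⟨hvn', -⟩ := para_vn hpara' hn
  have hU0 : ∀ {W : Fin (n + 1) → Bool}, UpCt W 1 = 1 → W ⟨0, by omega⟩ = true := by
    intro W hW
    have := UpCt_succ W (show (0:ℕ) < n + 1 by omega)
    rw [UpCt_zero] at this
    by_contra hb
    simp only [Bool.not_eq_true] at hb
    rw [hb] at this
    simp at this
    omega
  have hVn : ∀ {W : Fin (n + 1) → Bool}, UpCt W (n + 1) = UpCt W n + 1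
      → W ⟨n, by omega⟩ = true := by
    intro W hW
    have := UpCt_succ W (show n < n + 1 by omega)
    by_contra hb
    simp only [Bool.not_eq_true] at hb
    rw [hb] at this
    simp at this
    omega
  constructor
  · funext i
    rcases Nat.eq_zero_or_pos i.val with h0 | h0
    · have hi : i = ⟨0, by omega⟩ := Fin.ext h0
      rw [hi, hU0 hu1, hU0 hu1']
    · have hlt : 2 * (i.val - 1) + 1 < 2 * n := by have := i.isLt; omega
      have h1 : psi1 U V ⟨2 * (i.val - 1) + 1, hlt⟩ = U ⟨i.val - 1 + 1, by have := i.isLt; omega⟩ :=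
        psi1_odd hlt (by have := i.isLt; omega)
      have h2 : psi1 U' V' ⟨2 * (i.val - 1) + 1, hlt⟩
          = U' ⟨i.val - 1 + 1, by have := i.isLt; omega⟩ :=
        psi1_odd hlt (by have := i.isLt; omega)
      have hii : (⟨i.val - 1 + 1, by have := i.isLt; omega⟩ : Fin (n + 1)) = i :=
        Fin.ext (show i.val - 1 + 1 = i.val by omega)
      rw [hii] at h1 h2
      rw [← h1, ← h2, heq]
  · funext i
    rcases Nat.lt_or_ge i.val n with hlt | hge
    · have h2i : 2 * i.val < 2 * n := by omega
      have h1 : psi1 U V ⟨2 * i.val, h2i⟩ = ! V ⟨i.val, by omega⟩ := psi1_even h2i (by omega)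
      have h2 : psi1 U' V' ⟨2 * i.val, h2i⟩ = ! V' ⟨i.val, by omega⟩ := psi1_even h2i (by omega)
      have hii : (⟨i.val, by omega⟩ : Fin (n + 1)) = i := Fin.ext rfl
      rw [hii] at h1 h2
      rw [← heq, h1] at h2
      exact Bool.not_inj h2
    · have hi : i = ⟨n, by omega⟩ := Fin.ext (show i.val = n by have := i.isLt; omega)
      rw [hi, hVn hvn, hVn hvn']

end Psi
section Assemble
open Finset MvPolynomial

lemma mem_ParaSet {m : ℕ} {UV : (Fin m → Bool) × (Fin m → Bool)} :
    UV ∈ ParaSet m ↔ IsParaPoly UV.1 UV.2 := by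
  simp [ParaSet]

lemma card_para_le_dyck {n : ℕ} (hn : 0 < n) :
    (ParaSet (n + 1)).card ≤ (DyckSet n).card := by
  classical
  apply Finset.card_le_card_of_injOn (fun UV => psi1 UV.1 UV.2)
  · intro UV hUV
    exact mem_DyckSet.2 (psi1_dyck (mem_ParaSet.1 hUV) hn)
  · intro a ha b hb hab
    have h := psi1_inj (mem_ParaSet.1 ha) (mem_ParaSet.1 hb) hn hab
    exact Prod.ext h.1 h.2

lemma main_sum {n : ℕ} (hn : 0 < n) :
    PPoly (n + 1) = ∑ P ∈ DyckSet n,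
      (X 0 : MvPolynomial (Fin 2) ℤ) ^ (n + (alphaPath P - betaPath P))
        * X 1 ^ (desPath P + 1) := by
  classical
  rw [PPoly]
  symm
  apply Finset.sum_nbij (fun P => (mkU P, mkV P))
  · intro P hP
    exact mem_ParaSet.2 (mkUV_para (mem_DyckSet.1 hP) hn)
  · intro a ha b hb hab
    simp only [Finset.mem_coe] at ha hb
    simp only [Prod.mk.injEq] at hab
    exact mk_injective (mem_DyckSet.1 ha) (mem_DyckSet.1 hb) hn hab.1 hab.2
  · -- surjectivity via cardinality
    intro b hb
    simp only [Finset.mem_coe] at hb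
    have hsurj := Finset.surj_on_of_inj_on_of_card_le
      (s := DyckSet n) (t := ParaSet (n + 1)) (fun P _ => (mkU P, mkV P))
      (fun P hP => mem_ParaSet.2 (mkUV_para (mem_DyckSet.1 hP) hn))
      (fun a b ha hb hab => by
        simp only [Prod.mk.injEq] at hab
        exact mk_injective (mem_DyckSet.1 ha) (mem_DyckSet.1 hb) hn hab.1 hab.2)
      (card_para_le_dyck hn)
    obtain ⟨a, ha, hab⟩ := hsurj b hb
    exact ⟨a, by simp only [Finset.mem_coe]; exact ha, hab.symm⟩
  · intro P hP
    have h1 := area_eq (mem_DyckSet.1 hP) hn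
    have h2 := col_eq (mem_DyckSet.1 hP) hn
    rw [h1, h2]

end Assemble
section Zero
open Finset MvPolynomial

lemma dyck0 : DyckSet 0 = {fun i : Fin (2 * 0) => i.elim0} := by decide

lemma para1 : ParaSet 1 = {((fun _ : Fin 1 => false), (fun _ : Fin 1 => false))} := by decide

end Zero

theorem stmt7' (n : ℕ) :
    (∀ P ∈ DyckSet n, betaPath P ≤ alphaPath P) ∧
    PPoly (n + 1) = X 0 ^ n * X 1 *
      ∑ P ∈ DyckSet n,
        (X 0 : MvPolynomial (Fin 2) ℤ) ^ (alphaPath P - betaPath P) * X 1 ^ desPath P := by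
  constructor
  · intro P hP
    apply Finset.sum_le_sum
    intro v _
    exact dyck_dc_le_uc (mem_DyckSet.1 hP) (by have := v.isLt; omega)
  · rcases Nat.eq_zero_or_pos n with rfl | hn
    · show PPoly 1 = X 0 ^ 0 * X 1 *
          ∑ P ∈ DyckSet 0, (X 0 : MvPolynomial (Fin 2) ℤ) ^ (alphaPath P - betaPath P)
            * X 1 ^ desPath P
      rw [PPoly, para1, dyck0, Finset.sum_singleton, Finset.sum_singleton]
      have h1 : areaPoly (fun _ : Fin 1 => false) (fun _ : Fin 1 => false) = 0 := by decide
      have h2 : colPoly (fun _ : Fin 1 => false) = 1 := by decide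
      have h3 : alphaPath (fun i : Fin (2 * 0) => i.elim0) = 0 := by decide
      have h4 : betaPath (fun i : Fin (2 * 0) => i.elim0) = 0 := by decide
      have h5 : desPath (fun i : Fin (2 * 0) => i.elim0) = 0 := by decide
      rw [h1, h2, h3, h4, h5]
      ring
    · rw [main_sum hn, Finset.mul_sum]
      apply Finset.sum_congr rfl
      intro P _
      rw [pow_add, pow_succ]
      ring

/-- `α(P) ≥ β(P)` for every Dyck path, and
`P_{n+1}(q,t) = q^n t Σ_{P ∈ D_n} q^{α(P)-β(P)} t^{des P}`. -/
theorem stmt7 (n : ℕ) :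
    (∀ P ∈ DyckSet n, betaPath P ≤ alphaPath P) ∧
    PPoly (n + 1) = X 0 ^ n * X 1 *
      ∑ P ∈ DyckSet n,
        (X 0 : MvPolynomial (Fin 2) ℤ) ^ (alphaPath P - betaPath P) * X 1 ^ desPath P :=
  stmt7' n
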